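/- Let F(x_0,...,x_n) = x_0 G_0(x_0,...,x_n) + G_1(x_1,...,x_n) G_2(x_1,...,x_n) be a homogeneous polynomial of degree d ≥ 2 in n+1 ≥ 5 variables, where G_1 and G_2 are nonconstant homogeneous polynomials in x_1,...,x_n. Then the projective hypersurface F = 0 is singular; indeed any point satisfying x_0 = G_0 = G_1 = G_2 = 0 (which exists in projective space since n ≥ 4) is a singular point of F = 0. -/

import Mathlib

open MvPolynomial Finset

lemma my_degree_add {σ : Type*} (a b : σ →₀ ℕ) :
    (a + b).degree = a.degree + b.degree := by
  simp only [Finsupp.degree_eq_weight_one, map_add]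

lemma my_hc_mul {σ R : Type*} [CommSemiring R] [DecidableEq σ] (c f : MvPolynomial σ R) {d : ℕ}
    (hf : f.IsHomogeneous d) (e : ℕ) :
    homogeneousComponent (e + d) (c * f) = homogeneousComponent e c * f := by
  ext ν
  rw [coeff_homogeneousComponent, coeff_mul, coeff_mul]
  by_cases hν : ν.degree = e + d
  · rw [if_pos hν]
    refine Finset.sum_congr rfl fun ab hab => ?_
    rcases eq_or_ne (coeff ab.2 f) 0 with h0 | h0
    · rw [h0, mul_zero, mul_zero]
    · have hb : ab.2.degree = d := by rw [Finsupp.degree_eq_weight_one]; exact hf h0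
      have hadd : ab.1 + ab.2 = ν := Finset.HasAntidiagonal.mem_antidiagonal.mp hab
      have ha : ab.1.degree = e := by
        have h2 : ab.1.degree + ab.2.degree = e + d := by rw [← my_degree_add, hadd, hν]
        omega
      rw [coeff_homogeneousComponent, if_pos ha]
  · rw [if_neg hν]
    refine (Finset.sum_eq_zero fun ab hab => ?_).symm
    rcases eq_or_ne (coeff ab.2 f) 0 with h0 | h0
    · rw [h0, mul_zero]
    · have hb : ab.2.degree = d := by rw [Finsupp.degree_eq_weight_one]; exact hf h0
      have hadd : ab.1 + ab.2 = ν := Finset.HasAntidiagonal.mem_antidiagonal.mp hab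
      rw [coeff_homogeneousComponent, if_neg, zero_mul]
      intro ha
      exact hν (by rw [← hadd, my_degree_add, ha, hb])

lemma my_hc_mul_zero {σ R : Type*} [CommSemiring R] [DecidableEq σ] (c f : MvPolynomial σ R) {d t : ℕ}
    (hf : f.IsHomogeneous d) (ht : t < d) :
    homogeneousComponent t (c * f) = 0 := by
  ext ν
  rw [coeff_homogeneousComponent, coeff_zero]
  by_cases hν : ν.degree = t
  · rw [if_pos hν, coeff_mul]
    refine Finset.sum_eq_zero fun ab hab => ?_
    rcases eq_or_ne (coeff ab.2 f) 0 with h0 | h0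
    · rw [h0, mul_zero]
    · have hb : ab.2.degree = d := by rw [Finsupp.degree_eq_weight_one]; exact hf h0
      have hadd : ab.1 + ab.2 = ν := Finset.HasAntidiagonal.mem_antidiagonal.mp hab
      have : ab.1.degree + ab.2.degree = t := by rw [← my_degree_add, hadd, hν]
      omega
  · rw [if_neg hν]

section Zero
variable {K : Type*} [Field K] {N : ℕ}

open scoped Classical in
/-- spanning set: products of powers of the `f j` (exponents `≤ t`) with monomials of
exponents `< D`. -/
noncomputable def myE (f : Fin 4 → MvPolynomial (Fin N) K) (D t : ℕ) :
    Finset (MvPolynomial (Fin N) K) :=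
  ((Fintype.piFinset fun _ : Fin 4 => Finset.range (t+1)) ×ˢ
      (Fintype.piFinset fun _ : Fin N => Finset.range D)).image
    (fun p : (Fin 4 → ℕ) × (Fin N → ℕ) =>
      (∏ j, f j ^ p.1 j) * monomial (Finsupp.equivFunOnFinite.symm p.2) 1)

lemma myE_mono (f : Fin 4 → MvPolynomial (Fin N) K) (D : ℕ) {t t' : ℕ} (h : t ≤ t') :
    myE f D t ⊆ myE f D t' := by
  classical
  unfold myE
  apply Finset.image_subset_image
  apply Finset.product_subset_product_left
  exact Fintype.piFinset_subset _ _ fun a => Finset.range_subset_range.mpr (by omega)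

lemma myE_card_le (f : Fin 4 → MvPolynomial (Fin N) K) (D t : ℕ) :
    (myE f D t).card ≤ (t+1)^4 * D^N := by
  classical
  unfold myE
  calc _ ≤ ((Fintype.piFinset fun _ : Fin 4 => Finset.range (t+1)) ×ˢ
        (Fintype.piFinset fun _ : Fin N => Finset.range D)).card := Finset.card_image_le
    _ = (t+1)^4 * D^N := by
        rw [Finset.card_product, Fintype.card_piFinset, Fintype.card_piFinset]
        simp

lemma mem_myE (f : Fin 4 → MvPolynomial (Fin N) K) {D t : ℕ} (α : Fin 4 → ℕ)
    (μ : Fin N →₀ ℕ) (h1 : ∀ j, α j ≤ t) (h2 : ∀ a, μ a < D) :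
    (∏ j, f j ^ α j) * monomial μ 1 ∈ myE f D t := by
  classical
  unfold myE
  refine Finset.mem_image.mpr ⟨⟨α, ⇑μ⟩, ?_, ?_⟩
  · rw [Finset.mem_product]
    exact ⟨Fintype.mem_piFinset.mpr fun a => Finset.mem_range.mpr (Nat.lt_succ_of_le (h1 a)),
      Fintype.mem_piFinset.mpr fun a => Finset.mem_range.mpr (h2 a)⟩
  · simp

lemma myE_mul_mem (f : Fin 4 → MvPolynomial (Fin N) K) (D : ℕ) (j : Fin 4) (t : ℕ)
    (p : MvPolynomial (Fin N) K)
    (hp : p ∈ Submodule.span K (myE f D t : Set (MvPolynomial (Fin N) K))) :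
    p * f j ∈ Submodule.span K (myE f D (t+1) : Set (MvPolynomial (Fin N) K)) := by
  classical
  have hle : Submodule.map (LinearMap.mulRight K (f j))
      (Submodule.span K (myE f D t : Set (MvPolynomial (Fin N) K))) ≤
      Submodule.span K (myE f D (t+1) : Set (MvPolynomial (Fin N) K)) := by
    rw [Submodule.map_span, Submodule.span_le]
    rintro _ ⟨q, hq, rfl⟩
    apply Submodule.subset_span
    rw [Finset.mem_coe] at hq ⊢
    unfold myE at hq
    obtain ⟨⟨α, μ⟩, hmem, rfl⟩ := Finset.mem_image.mp hq
    rw [Finset.mem_product] at hmem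
    set α' : Fin 4 → ℕ := α + Pi.single j 1 with hα'
    have hP : (∏ i, f i ^ (α') i) = (∏ i, f i ^ α i) * f j := by
      have hfun : (fun i => f i ^ (α') i) =
          fun i => f i ^ α i * f i ^ (Pi.single j 1 i) :=
        funext fun i => by rw [hα', Pi.add_apply, pow_add]
      rw [hfun, Finset.prod_mul_distrib]
      congr 1
      rw [Fintype.prod_eq_single j (fun i hi => by rw [Pi.single_eq_of_ne hi, pow_zero]),
        Pi.single_eq_same, pow_one]
    have hgoal : (LinearMap.mulRight K (f j))
        ((∏ i, f i ^ α i) * monomial (Finsupp.equivFunOnFinite.symm μ) 1)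
        = (∏ i, f i ^ (α') i) *
          monomial (Finsupp.equivFunOnFinite.symm μ) 1 := by
      simp only [LinearMap.mulRight_apply, hP]
      ring
    rw [hgoal]
    unfold myE
    refine Finset.mem_image.mpr ⟨⟨α', μ⟩, ?_, rfl⟩
    rw [Finset.mem_product]
    refine ⟨Fintype.mem_piFinset.mpr fun a => Finset.mem_range.mpr ?_, hmem.2⟩
    show α' a < t + 1 + 1
    have hr : α a < t + 1 := Finset.mem_range.mp (Fintype.mem_piFinset.mp hmem.1 a)
    have h2 : (Pi.single j 1 : Fin 4 → ℕ) a ≤ 1 := by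
      rcases eq_or_ne a j with rfl | ha
      · rw [Pi.single_eq_same]
      · rw [Pi.single_eq_of_ne ha]; omega
    have : α' a = α a + (Pi.single j 1 : Fin 4 → ℕ) a := by rw [hα', Pi.add_apply]
    omega
  exact hle ⟨p, hp, rfl⟩
end Zero

section Zero2
variable {K : Type*} [Field K] {N : ℕ}

lemma my_key (f : Fin 4 → MvPolynomial (Fin N) K) (dg : Fin 4 → ℕ)
    (hdg : ∀ j, 1 ≤ dg j) (hf : ∀ j, (f j).IsHomogeneous (dg j)) (Nm : ℕ)
    (hXNm : ∀ i : Fin N, X i ^ Nm ∈ Ideal.span (Set.range f)) :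
    ∀ s : ℕ, ∀ p : MvPolynomial (Fin N) K, p.IsHomogeneous s →
      p ∈ Submodule.span K (myE f (N * (Nm - 1) + 1) s : Set (MvPolynomial (Fin N) K)) := by
  classical
  set D : ℕ := N * (Nm - 1) + 1 with hDdef
  intro s
  induction s using Nat.strong_induction_on with
  | _ s IH =>
    intro p hp
    rw [p.as_sum]
    refine Submodule.sum_mem _ fun v hv => ?_
    have hdeg : v.degree = s := by
      rw [Finsupp.degree_eq_weight_one]; exact hp (mem_support_iff.mp hv)
    have hsm : monomial v (coeff v p) = coeff v p • (monomial v 1 : MvPolynomial (Fin N) K) := by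
      rw [smul_monomial, smul_eq_mul, mul_one]
    rw [hsm]
    refine Submodule.smul_mem _ _ ?_
    by_cases hsD : s < D
    · apply Submodule.subset_span
      have h0 : (monomial v 1 : MvPolynomial (Fin N) K) = (∏ j, f j ^ (0 : Fin 4 → ℕ) j) *
          monomial v 1 := by simp
      rw [Finset.mem_coe, h0]
      refine mem_myE f 0 v (fun j => Nat.zero_le _) fun a => ?_
      have hle := Finsupp.le_degree a v
      omega
    · push_neg at hsD
      have hex : ∃ i, Nm ≤ v i := by
        by_contra hno
        push_neg at hno
        have hbound : v.degree ≤ N * (Nm - 1) := by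
          calc v.degree = ∑ i ∈ v.support, v i := rfl
            _ ≤ ∑ i : Fin N, v i := Finset.sum_le_sum_of_subset (Finset.subset_univ _)
            _ ≤ ∑ _i : Fin N, (Nm - 1) := Finset.sum_le_sum fun i _ => by have := hno i; omega
            _ = N * (Nm - 1) := by
                rw [Finset.sum_const, Finset.card_univ, Fintype.card_fin, smul_eq_mul]
        omega
      obtain ⟨i, hi⟩ := hex
      set w := v - Finsupp.single i Nm with hw
      have hvw : Finsupp.single i Nm + w = v := by
        ext a
        rcases eq_or_ne a i with rfl | ha
        · simp only [hw, Finsupp.add_apply, Finsupp.tsub_apply, Finsupp.single_eq_same]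
          omega
        · simp only [hw, Finsupp.add_apply, Finsupp.tsub_apply,
            Finsupp.single_eq_of_ne' (Ne.symm ha)]
          omega
      obtain ⟨c, hc⟩ := Ideal.mem_span_range_iff_exists_fun.mp (hXNm i)
      have hsplit : (monomial v 1 : MvPolynomial (Fin N) K)
          = ∑ j, (c j * monomial w 1) * f j := by
        have h1 : (monomial v 1 : MvPolynomial (Fin N) K) = X i ^ Nm * monomial w 1 := by
          rw [X_pow_eq_monomial, monomial_mul, one_mul, hvw]
        rw [h1, ← hc, Finset.sum_mul]
        exact Finset.sum_congr rfl fun j _ => by ring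
      have hmono_homog : (monomial v (1:K)).IsHomogeneous s := isHomogeneous_monomial _ hdeg
      have h5 : (monomial v (1:K))
          = ∑ j, homogeneousComponent s ((c j * monomial w 1) * f j) := by
        calc (monomial v (1:K)) = homogeneousComponent s (monomial v 1) := by
              rw [homogeneousComponent_of_mem ((mem_homogeneousSubmodule _ _).mpr
                hmono_homog), if_pos rfl]
          _ = homogeneousComponent s (∑ j, (c j * monomial w 1) * f j) := by rw [← hsplit]
          _ = ∑ j, homogeneousComponent s ((c j * monomial w 1) * f j) := map_sum _ _ _
      rw [h5]
      refine Submodule.sum_mem _ fun j _ => ?_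
      by_cases hj : dg j ≤ s
      · have h6 : homogeneousComponent s ((c j * monomial w 1) * f j)
            = homogeneousComponent (s - dg j) (c j * monomial w 1) * f j := by
          have h66 := my_hc_mul (c j * monomial w 1) (f j) (hf j) (s - dg j)
          rw [show s - dg j + dg j = s by omega] at h66
          exact h66
        rw [h6]
        have hq := homogeneousComponent_isHomogeneous (s - dg j) (c j * monomial w 1)
        have hlt : s - dg j < s := Nat.sub_lt (by omega) (hdg j)
        have hqs := IH (s - dg j) hlt _ hq
        have h7 := myE_mul_mem f D j (s - dg j) _ hqs
        exact Submodule.span_mono (Finset.coe_subset.mpr (myE_mono f D (by omega))) h7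
      · push_neg at hj
        rw [my_hc_mul_zero _ _ (hf j) hj]
        exact Submodule.zero_mem _

lemma my_exists_common_zero [IsAlgClosed K] (hN : 5 ≤ N)
    (f : Fin 4 → MvPolynomial (Fin N) K) (dg : Fin 4 → ℕ)
    (hdg : ∀ j, 1 ≤ dg j) (hf : ∀ j, (f j).IsHomogeneous (dg j)) :
    ∃ x : Fin N → K, x ≠ 0 ∧ ∀ j, eval x (f j) = 0 := by
  classical
  by_contra hcon
  push_neg at hcon
  set J : Ideal (MvPolynomial (Fin N) K) := Ideal.span (Set.range f) with hJ
  have hzl : ∀ x ∈ zeroLocus K J, x = (0 : Fin N → K) := by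
    intro x hx
    by_contra hx0
    obtain ⟨j, hj⟩ := hcon x hx0
    exact hj (by simpa [coe_aeval_eq_eval] using mem_zeroLocus_iff.mp hx (f j) (Ideal.subset_span ⟨j, rfl⟩))
  have hXr : ∀ i : Fin N, ∃ m : ℕ, X i ^ m ∈ J := by
    intro i
    have hXi : (X i : MvPolynomial (Fin N) K) ∈ J.radical := by
      rw [← vanishingIdeal_zeroLocus_eq_radical (K := K), mem_vanishingIdeal_iff]
      intro x hx
      rw [hzl x hx, aeval_X]
      rfl
    exact Ideal.mem_radical_iff.mp hXi
  choose m hm using hXr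
  set Nm : ℕ := (Finset.univ.sup m) + 1 with hNmdef
  have hXNm : ∀ i : Fin N, X i ^ Nm ∈ J := by
    intro i
    have h1 : m i ≤ Nm := le_trans (Finset.le_sup (Finset.mem_univ i)) (Nat.le_succ _)
    have h2 : (X i : MvPolynomial (Fin N) K) ^ Nm = X i ^ (Nm - m i) * X i ^ (m i) := by
      rw [← pow_add, Nat.sub_add_cancel h1]
    rw [h2]
    exact J.mul_mem_left _ (hm i)
  set D : ℕ := N * (Nm - 1) + 1 with hDdef
  have hkey := my_key f dg hdg hf Nm hXNm
  have hcount : ∀ u : ℕ, (u+1)^N ≤ (N*u+1)^4 * D^N := by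
    intro u
    set t := N * u with ht
    set T : Finset (Fin N →₀ ℕ) :=
      (Fintype.piFinset fun _ : Fin N => Finset.range (u+1)).image
        Finsupp.equivFunOnFinite.symm with hT
    have hTcard : T.card = (u+1)^N := by
      rw [hT, Finset.card_image_of_injective _ (Equiv.injective _), Fintype.card_piFinset]
      simp
    have hlin : LinearIndependent K
        (fun μ : T => (monomial μ.1 1 : MvPolynomial (Fin N) K)) := by
      have h := (MvPolynomial.basisMonomials (Fin N) K).linearIndependent
      have h2 := h.comp (fun μ : T => μ.1) Subtype.val_injective
      rw [coe_basisMonomials] at h2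
      exact h2
    have hsub : Set.range (fun μ : T => (monomial μ.1 1 : MvPolynomial (Fin N) K)) ≤
        (Submodule.span K (myE f D t : Set (MvPolynomial (Fin N) K)) : Set _) := by
      rintro _ ⟨μ, rfl⟩
      have hval : ∀ a, μ.1 a ≤ u := by
        intro a
        have hμ2 := μ.2
        simp only [hT] at hμ2
        obtain ⟨g, hg, hμ⟩ := Finset.mem_image.mp hμ2
        have h3 : g a < u + 1 := Finset.mem_range.mp (Fintype.mem_piFinset.mp hg a)
        have h4 : (Finsupp.equivFunOnFinite.symm g) a = g a := rfl
        rw [hμ] at h4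
        rw [h4]
        omega
      have hdeg : (μ.1).degree ≤ t := by
        calc (μ.1).degree = ∑ i ∈ (μ.1).support, μ.1 i := rfl
          _ ≤ ∑ i : Fin N, μ.1 i := Finset.sum_le_sum_of_subset (Finset.subset_univ _)
          _ ≤ ∑ _i : Fin N, u := Finset.sum_le_sum fun i _ => hval i
          _ = N * u := by rw [Finset.sum_const, Finset.card_univ, Fintype.card_fin, smul_eq_mul]
      have h8 := hkey (μ.1).degree (monomial μ.1 1) (isHomogeneous_monomial _ rfl)
      exact Submodule.span_mono (Finset.coe_subset.mpr (myE_mono f D hdeg)) h8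
    have hcard := linearIndependent_le_span' _ hlin
      (myE f D t : Set (MvPolynomial (Fin N) K)) hsub
    have hfin : T.card ≤ (myE f D t).card := by
      rw [Cardinal.mk_coe_finset] at hcard
      have h9 : Fintype.card (↑(myE f D t) : Set (MvPolynomial (Fin N) K))
          = (myE f D t).card := by simp
      rw [h9] at hcard
      exact_mod_cast hcard
    calc (u+1)^N = T.card := hTcard.symm
      _ ≤ (myE f D t).card := hfin
      _ ≤ (t+1)^4 * D^N := myE_card_le f D t
  set C := D^N with hC
  have hC1 : 1 ≤ C := Nat.one_le_pow _ _ (by omega)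
  set u := N^4 * C with hu
  have h1 := hcount u
  have h2 : (u+1)^5 ≤ (u+1)^N := Nat.pow_le_pow_right (by omega) hN
  have h3 : (N*u+1)^4 ≤ (N*(u+1))^4 := Nat.pow_le_pow_left (by rw [Nat.mul_succ]; omega) 4
  have h4 : (N*(u+1))^4 * C = u * (u+1)^4 := by
    rw [mul_pow, hu]; ring
  have h5 : u * (u+1)^4 < (u+1)^5 := by
    have hpos : 0 < (u+1)^4 := pow_pos (by omega) 4
    calc u * (u+1)^4 < (u+1) * (u+1)^4 := by
          exact Nat.mul_lt_mul_of_lt_of_le (by omega) le_rfl hpos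
      _ = (u+1)^5 := by ring
  have h7 : (u+1)^5 ≤ u * (u+1)^4 := by
    calc (u+1)^5 ≤ (u+1)^N := h2
      _ ≤ (N*u+1)^4 * C := h1
      _ ≤ (N*(u+1))^4 * C := Nat.mul_le_mul_right _ h3
      _ = u * (u+1)^4 := h4
  exact absurd h7 (not_le.mpr h5)
end Zero2

/-- Let `F = x₀·G₀ + G₁·G₂` be homogeneous of degree `d ≥ 2` in `n+1 ≥ 5` variables over `ℚ`,
where `G₀` is homogeneous of degree `d - 1`, and `G₁, G₂` are nonconstant homogeneous polynomials
in `x₁, …, xₙ` only.  Then the projective hypersurface `F = 0` is singular: there exists a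
nonzero point over `ℚ̄` with `x₀ = G₀ = G₁ = G₂ = 0`, and it is a singular point of `F = 0`. -/
theorem stmt4 (n d e₁ e₂ : ℕ) (hn : 4 ≤ n) (hd : 2 ≤ d)
    (F G₀ G₁ G₂ : MvPolynomial (Fin (n + 1)) ℚ)
    (hF : F.IsHomogeneous d) (hdecomp : F = X 0 * G₀ + G₁ * G₂)
    (hG₀ : G₀.IsHomogeneous (d - 1))
    (hG₁h : G₁.IsHomogeneous e₁) (he₁ : 1 ≤ e₁) (hG₁0 : G₁ ≠ 0)
    (hG₂h : G₂.IsHomogeneous e₂) (he₂ : 1 ≤ e₂) (hG₂0 : G₂ ≠ 0)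
    (hv₁ : ∀ m ∈ G₁.support, m 0 = 0) (hv₂ : ∀ m ∈ G₂.support, m 0 = 0) :
    ∃ x : Fin (n + 1) → AlgebraicClosure ℚ, x ≠ 0 ∧ x 0 = 0 ∧
      aeval x G₀ = 0 ∧ aeval x G₁ = 0 ∧ aeval x G₂ = 0 ∧
      aeval x F = 0 ∧ ∀ j, aeval x (pderiv j F) = 0 := by
  classical
  have h5 : 5 ≤ n + 1 := by omega
  set q : MvPolynomial (Fin (n+1)) ℚ →+* MvPolynomial (Fin (n+1)) (AlgebraicClosure ℚ) :=
    (MvPolynomial.map (algebraMap ℚ (AlgebraicClosure ℚ))) with hq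
  set f : Fin 4 → MvPolynomial (Fin (n+1)) (AlgebraicClosure ℚ) :=
    ![X 0, q G₀, q G₁, q G₂] with hfdef
  set dg : Fin 4 → ℕ := ![1, d - 1, e₁, e₂] with hdg
  have hdg1 : ∀ j, 1 ≤ dg j := by
    intro j
    fin_cases j <;> simp [hdg] <;> omega
  have hfh : ∀ j, (f j).IsHomogeneous (dg j) := by
    intro j
    fin_cases j
    · simpa [hfdef, hdg] using isHomogeneous_X _ (0 : Fin (n+1))
    · simpa [hfdef, hdg] using hG₀.map (algebraMap ℚ (AlgebraicClosure ℚ))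
    · simpa [hfdef, hdg] using hG₁h.map (algebraMap ℚ (AlgebraicClosure ℚ))
    · simpa [hfdef, hdg] using hG₂h.map (algebraMap ℚ (AlgebraicClosure ℚ))
  obtain ⟨x, hxne, hxz⟩ := my_exists_common_zero h5 f dg hdg1 hfh
  have hx0 : x 0 = 0 := by
    have h := hxz 0
    simpa [hfdef] using h
  have haev : ∀ G : MvPolynomial (Fin (n+1)) ℚ, aeval x G = eval x (q G) := by
    intro G
    rw [hq, aeval_def, eval_map]
  have hg0 : aeval x G₀ = 0 := by
    have h := hxz 1
    rw [haev]
    simpa [hfdef] using h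
  have hg1 : aeval x G₁ = 0 := by
    have h := hxz 2
    rw [haev]
    simpa [hfdef] using h
  have hg2 : aeval x G₂ = 0 := by
    have h := hxz 3
    rw [haev]
    simpa [hfdef] using h
  refine ⟨x, hxne, hx0, hg0, hg1, hg2, ?_, ?_⟩
  · rw [hdecomp]
    simp [hx0, hg1, hg2]
  · intro j
    rw [hdecomp]
    simp [pderiv_mul, hx0, hg0, hg1, hg2]
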